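/- For a probability measure μ on the unit circle 𝕋, define ψ_μ(z) = ∫_𝕋 zζ/(1−zζ) dμ(ζ) and η_μ(z) = ψ_μ(z)/(1+ψ_μ(z)) for z in the open unit disk 𝔻. Then η_μ is analytic on 𝔻 and satisfies |η_μ(z)| ≤ |z| for all z ∈ 𝔻. -/

import Mathlib

open MeasureTheory Complex

lemma aux_norm (z ζ : ℂ) (hz : ‖z‖ < 1) (hζ : ‖ζ‖ = 1) :
    1 - ‖z‖ ≤ ‖1 - z * ζ‖ := by
  have h : ‖z * ζ‖ = ‖z‖ := by rw [norm_mul, hζ, mul_one]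
  calc 1 - ‖z‖ = ‖(1:ℂ)‖ - ‖z * ζ‖ := by rw [norm_one, h]
  _ ≤ ‖1 - z * ζ‖ := norm_sub_norm_le _ _

lemma aux_meas (z : ℂ) : Measurable (fun ζ : ℂ => z * ζ / (1 - z * ζ)) :=
  (measurable_const.mul measurable_id).div
    (measurable_const.sub (measurable_const.mul measurable_id))

lemma aux_int (μ : Measure ℂ) [IsProbabilityMeasure μ]
    (hae : ∀ᵐ ζ ∂μ, ‖ζ‖ = 1) (z : ℂ) (hz : ‖z‖ < 1) :
    Integrable (fun ζ : ℂ => z * ζ / (1 - z * ζ)) μ := by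
  refine Integrable.mono' (integrable_const (‖z‖ / (1 - ‖z‖)))
    (aux_meas z).aestronglyMeasurable ?_
  filter_upwards [hae] with ζ hζ
  rw [norm_div, norm_mul, hζ, mul_one]
  have := aux_norm z ζ hz hζ
  apply div_le_div_of_nonneg_left (norm_nonneg z) (by linarith) this |>.trans
  exact le_rfl

lemma aux_psi_deriv (μ : Measure ℂ) [IsProbabilityMeasure μ]
    (hae : ∀ᵐ ζ ∂μ, ‖ζ‖ = 1) (z₀ : ℂ) (hz₀ : ‖z₀‖ < 1) :
    HasDerivAt (fun z => ∫ ζ : ℂ, z * ζ / (1 - z * ζ) ∂μ)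
      (∫ ζ : ℂ, ζ / (1 - z₀ * ζ) ^ 2 ∂μ) z₀ := by
  set r : ℝ := (1 + ‖z₀‖) / 2 with hr
  have hrlt : r < 1 := by rw [hr]; linarith
  have hεpos : (0:ℝ) < (1 - ‖z₀‖) / 2 := by linarith
  have hball : ∀ z ∈ Metric.ball z₀ ((1 - ‖z₀‖) / 2), ‖z‖ < r := by
    intro z hz
    rw [Metric.mem_ball, dist_eq_norm] at hz
    calc ‖z‖ = ‖z₀ + (z - z₀)‖ := by ring_nf
    _ ≤ ‖z₀‖ + ‖z - z₀‖ := norm_add_le _ _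
    _ < r := by rw [hr]; linarith
  have key := hasDerivAt_integral_of_dominated_loc_of_deriv_le
    (F := fun z (ζ : ℂ) => z * ζ / (1 - z * ζ))
    (F' := fun z (ζ : ℂ) => ζ / (1 - z * ζ) ^ 2)
    (bound := fun _ => 1 / (1 - r) ^ 2) (μ := μ) (x₀ := z₀) (Metric.ball_mem_nhds z₀ hεpos)
    (Filter.Eventually.of_forall fun z => (aux_meas z).aestronglyMeasurable)
    (aux_int μ hae z₀ hz₀)
    ((measurable_id.div
      ((measurable_const.sub (measurable_const.mul measurable_id)).pow_const 2)).aestronglyMeasurable)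
    ?_ (integrable_const _) ?_
  · exact key.2
  · filter_upwards [hae] with ζ hζ
    intro z hz
    have hz1 : ‖z‖ < 1 := (hball z hz).trans hrlt
    have h1 : 1 - ‖z‖ ≤ ‖1 - z * ζ‖ := aux_norm z ζ hz1 hζ
    have h2 : 1 - r ≤ ‖1 - z * ζ‖ := le_trans (by linarith [hball z hz]) h1
    rw [norm_div, hζ, norm_pow]
    have hp0 : (0:ℝ) < ‖1 - z * ζ‖ := lt_of_lt_of_le (by linarith) h2
    have hp1 : (0:ℝ) < ‖1 - z * ζ‖ ^ 2 := by positivity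
    have hp2 : (0:ℝ) < (1 - r) ^ 2 := by nlinarith
    rw [div_le_div_iff₀ hp1 hp2]
    nlinarith [hball z hz]
  · filter_upwards [hae] with ζ hζ
    intro z hz
    have hz1 : ‖z‖ < 1 := (hball z hz).trans hrlt
    have hne : 1 - z * ζ ≠ 0 := by
      intro h
      have := aux_norm z ζ hz1 hζ
      rw [h, norm_zero] at this; linarith
    have h1 : HasDerivAt (fun w : ℂ => w * ζ) ζ z := hasDerivAt_mul_const ζ
    have h2 : HasDerivAt (fun w : ℂ => 1 - w * ζ) (-ζ) z := by
      simpa using h1.const_sub (1:ℂ)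
    have := h1.div h2 hne
    convert this using 1
    congr 1
    · funext x; simp only [Pi.div_apply]
    ring

lemma aux_re (w : ℂ) (r : ℝ) (hw : ‖w‖ = r) (hr : r < 1) :
    -(1/2) + (1 - r^2)/(2*(1+r)^2) ≤ (w / (1 - w)).re := by
  have hr0 : 0 ≤ r := hw ▸ norm_nonneg w
  have hne : (1:ℂ) - w ≠ 0 := by
    intro h
    have hw1 : w = 1 := by linear_combination -h
    rw [hw1] at hw; simp at hw; linarith
  have hNpos : 0 < Complex.normSq (1 - w) := Complex.normSq_pos.2 hne
  have hsq : w.re^2 + w.im^2 = r^2 := by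
    have h1 : Complex.normSq w = r^2 := by
      rw [← Complex.sq_norm, hw]
    rw [Complex.normSq_apply] at h1
    nlinarith [h1]
  have hNval : Complex.normSq (1 - w) = 1 - 2*w.re + r^2 := by
    rw [Complex.normSq_apply]
    simp only [Complex.sub_re, Complex.sub_im, Complex.one_re, Complex.one_im]
    nlinarith [hsq]
  have hN : Complex.normSq (1 - w) ≤ (1+r)^2 := by
    have h1 : ‖(1:ℂ) - w‖ ≤ 1 + r := by
      calc ‖(1:ℂ) - w‖ ≤ ‖(1:ℂ)‖ + ‖w‖ := norm_sub_le _ _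
      _ = 1 + r := by rw [norm_one, hw]
    have h2 : Complex.normSq (1-w) = ‖(1:ℂ)-w‖^2 := by
      rw [← Complex.sq_norm]
    nlinarith [norm_nonneg ((1:ℂ) - w)]
  have hre : (w / (1 - w)).re = (w.re - r^2) / Complex.normSq (1 - w) := by
    rw [Complex.div_re]
    simp only [Complex.sub_re, Complex.sub_im, Complex.one_re, Complex.one_im]
    rw [← add_div]
    congr 1
    nlinarith [hsq]
  rw [hre]
  have key : (w.re - r^2) / Complex.normSq (1 - w)
      = (1 - r^2)/(2 * Complex.normSq (1 - w)) - 1/2 := by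
    field_simp
    nlinarith [hNval]
  rw [key]
  have h3 : (1 - r^2)/(2*(1+r)^2) ≤ (1 - r^2)/(2 * Complex.normSq (1 - w)) := by
    apply div_le_div_of_nonneg_left (by nlinarith) (by linarith) (by linarith)
  linarith

/-- For a probability measure `μ` on the unit circle, `η_μ = ψ_μ/(1+ψ_μ)` is
analytic on the open unit disk and satisfies `|η_μ(z)| ≤ |z|`. -/
theorem stmt6 (μ : Measure ℂ) [IsProbabilityMeasure μ]
    (hsupp : μ {ζ : ℂ | ‖ζ‖ = 1}ᶜ = 0)
    (ψ η : ℂ → ℂ)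
    (hψ : ∀ z, ψ z = ∫ ζ : ℂ, (z * ζ) / (1 - z * ζ) ∂μ)
    (hη : ∀ z, η z = ψ z / (1 + ψ z)) :
    AnalyticOnNhd ℂ η (Metric.ball (0 : ℂ) 1) ∧
      ∀ z ∈ Metric.ball (0 : ℂ) 1, ‖η z‖ ≤ ‖z‖ := by
  have hae : ∀ᵐ ζ ∂μ, ‖ζ‖ = 1 := by
    rw [ae_iff]
    exact hsupp
  have hψeq : ψ = fun w => ∫ ζ : ℂ, w * ζ / (1 - w * ζ) ∂μ := funext hψ
  have hψdiff : ∀ z ∈ Metric.ball (0:ℂ) 1, DifferentiableAt ℂ ψ z := by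
    intro z hz
    rw [Metric.mem_ball, dist_zero_right] at hz
    rw [hψeq]
    exact (aux_psi_deriv μ hae z hz).differentiableAt
  have hψdo : DifferentiableOn ℂ ψ (Metric.ball (0:ℂ) 1) :=
    fun z hz => (hψdiff z hz).differentiableWithinAt
  have hψana : AnalyticOnNhd ℂ ψ (Metric.ball 0 1) :=
    hψdo.analyticOnNhd Metric.isOpen_ball
  have hre : ∀ z ∈ Metric.ball (0:ℂ) 1, 1 < 2 * (1 + ψ z).re := by
    intro z hz
    rw [Metric.mem_ball, dist_zero_right] at hz
    have hInt := aux_int μ hae z hz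
    have hreInt := integral_re hInt
    simp only [RCLike.re_to_complex] at hreInt
    have hmono : ∫ _ : ℂ, (-(1/2) + (1 - ‖z‖^2)/(2*(1+‖z‖)^2) : ℝ) ∂μ
        ≤ ∫ ζ : ℂ, (z * ζ / (1 - z * ζ)).re ∂μ := by
      apply integral_mono_ae (integrable_const _) hInt.re
      filter_upwards [hae] with ζ hζ
      have hnm : ‖z * ζ‖ = ‖z‖ := by rw [norm_mul, hζ, mul_one]
      exact aux_re (z * ζ) ‖z‖ hnm hz
    rw [integral_const, probReal_univ, one_smul, hreInt] at hmono
    have hcpos : 0 < (1 - ‖z‖^2)/(2*(1+‖z‖)^2) := by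
      have h0 := norm_nonneg z
      apply div_pos (by nlinarith) (by nlinarith)
    simp only [Complex.add_re, Complex.one_re]
    rw [hψ z]
    linarith
  have hne0 : ∀ z ∈ Metric.ball (0:ℂ) 1, 1 + ψ z ≠ 0 := by
    intro z hz h
    have := hre z hz
    rw [h] at this
    simp at this
    linarith
  have hmaps : Set.MapsTo η (Metric.ball (0:ℂ) 1) (Metric.ball (0:ℂ) 1) := by
    intro z hz
    have h2 := hre z hz
    rw [Metric.mem_ball, dist_zero_right]
    have hlt : ‖ψ z‖ < ‖1 + ψ z‖ := by
      have e1 : ‖ψ z‖^2 = (ψ z).re^2 + (ψ z).im^2 := by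
        rw [Complex.sq_norm, Complex.normSq_apply]
        ring
      have e2 : ‖1 + ψ z‖^2 = (1 + (ψ z).re)^2 + (ψ z).im^2 := by
        rw [Complex.sq_norm, Complex.normSq_apply]
        simp only [Complex.add_re, Complex.add_im, Complex.one_re, Complex.one_im]
        ring
      simp only [Complex.add_re, Complex.one_re] at h2
      nlinarith [norm_nonneg (ψ z), norm_nonneg (1 + ψ z)]
    rw [hη, norm_div, div_lt_one (lt_of_le_of_lt (norm_nonneg _) hlt)]
    exact hlt
  have hηana : AnalyticOnNhd ℂ η (Metric.ball (0:ℂ) 1) := by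
    intro z hz
    have heq : η = fun w => ψ w / (1 + ψ w) := funext hη
    rw [heq]
    exact (hψana z hz).div (analyticAt_const.add (hψana z hz)) (hne0 z hz)
  refine ⟨hηana, fun z hz => ?_⟩
  rw [Metric.mem_ball, dist_zero_right] at hz
  have h0 : η 0 = 0 := by
    rw [hη, hψ]
    simp
  have hd : DifferentiableOn ℂ η (Metric.ball (0:ℂ) 1) :=
    fun w hw => ((hηana w hw).differentiableAt).differentiableWithinAt
  have := Complex.norm_le_norm_of_mapsTo_ball hd (hmaps.mono_right Metric.ball_subset_closedBall) h0
    (z := z) (by exact hz)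
  simpa using this
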